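/- In the generalized parent J-group J(K) with k_p = ∞, writing z = s_1⋯s_p, the group J(K) decomposes as a direct product ⟨s_1,...,s_{p−1}⟩ × ⟨z⟩, where ⟨s_1,...,s_{p−1}⟩ is the free product of the cyclic groups ⟨s_i⟩ ≅ ℤ/k_iℤ (or ℤ when k_i = ∞) and ⟨z⟩ ≅ ℤ. -/

import Mathlib

/-- The cyclically rotated product `a_i a_{i+1} ⋯ a_{i+p-1}` in the free group on `Fin p`
(indices taken mod `p`). -/
def cycProd (p : ℕ) (i : Fin p) : FreeGroup (Fin p) :=
  (List.ofFn (fun j : Fin p => FreeGroup.of (i + j))).prod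

/-- Relators of the generalized parent J-group `J(K)`:
`⟨s_1,…,s_p ∣ s_1⋯s_p = s_2⋯s_p s_1 = ⋯ = s_p s_1⋯s_{p-1}, s_i^{k_i} = 1 if k_i < ∞⟩`.
Here `k i = 0` encodes `k_i = ∞` (the relator `s_i ^ 0` is vacuous), and the equalities of
all cyclic rotations of the product are encoded by the relators
`(s_i ⋯ s_{i+p-1}) (s_j ⋯ s_{j+p-1})⁻¹`. -/
def JRels (p : ℕ) (k : Fin p → ℕ) : Set (FreeGroup (Fin p)) :=
  {r | (∃ i, r = FreeGroup.of i ^ k i) ∨ ∃ i j, r = cycProd p i * (cycProd p j)⁻¹}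

/-- The generalized parent J-group `J(K)`. -/
abbrev JGroup (p : ℕ) (k : Fin p → ℕ) := PresentedGroup (JRels p k)

/-- The central element `z = s_1 s_2 ⋯ s_p` of `J(K)`. -/
def zElt (p : ℕ) (k : Fin p → ℕ) : JGroup p k :=
  (List.ofFn (fun i : Fin p => (PresentedGroup.of i : JGroup p k))).prod

section Aux

open Multiplicative Monoid

variable {p : ℕ}

private lemma fin_last_add_one : (Fin.last p) + 1 = 0 := by
  ext
  simp [Fin.add_def]

private lemma fin_add_succ (i : Fin (p + 1)) (j : Fin p) :
    i + 1 + j.castSucc = i + j.succ := by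
  rw [← Fin.coeSucc_eq_succ, add_assoc, add_comm 1 j.castSucc, ← add_assoc, add_assoc]

private lemma fin_add_one_add_last (i : Fin (p + 1)) : i + 1 + Fin.last p = i := by
  rw [add_assoc, add_comm 1 (Fin.last p), fin_last_add_one, add_zero]

private lemma cycProd_head (i : Fin (p + 1)) :
    cycProd (p + 1) i
      = FreeGroup.of i * (List.ofFn fun j : Fin p => FreeGroup.of (i + j.succ)).prod := by
  rw [cycProd, List.ofFn_succ, List.prod_cons, add_zero]

private lemma cycProd_tail (i : Fin (p + 1)) :
    cycProd (p + 1) (i + 1)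
      = (List.ofFn fun j : Fin p => FreeGroup.of (i + j.succ)).prod * FreeGroup.of i := by
  rw [cycProd, List.ofFn_succ', List.concat_eq_append, List.prod_append, List.prod_cons,
    List.prod_nil, mul_one, fin_add_one_add_last]
  simp only [fin_add_succ]

private lemma cycProd_add_one (i : Fin (p + 1)) :
    cycProd (p + 1) (i + 1) = (FreeGroup.of i)⁻¹ * cycProd (p + 1) i * FreeGroup.of i := by
  rw [cycProd_head i, cycProd_tail i]
  group

end Aux
section JG

open Multiplicative Monoid

variable {p : ℕ} (k : Fin (p + 1) → ℕ)

private lemma mk_rel {r : FreeGroup (Fin (p + 1))} (hr : r ∈ JRels (p + 1) k) :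
    PresentedGroup.mk (JRels (p + 1) k) r = 1 :=
  (QuotientGroup.eq_one_iff _).mpr (Subgroup.subset_normalClosure hr)

private lemma mk_cycProd_eq (i j : Fin (p + 1)) :
    PresentedGroup.mk (JRels (p + 1) k) (cycProd (p + 1) i)
      = PresentedGroup.mk (JRels (p + 1) k) (cycProd (p + 1) j) := by
  have h := mk_rel k (Or.inr ⟨i, j, rfl⟩)
  rw [map_mul, map_inv, mul_inv_eq_one] at h
  exact h

private lemma of_pow_eq_one (i : Fin (p + 1)) :
    (PresentedGroup.of i : JGroup (p + 1) k) ^ k i = 1 := by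
  have h := mk_rel k (Or.inl ⟨i, rfl⟩)
  rw [map_pow] at h
  exact h

private lemma zElt_eq : zElt (p + 1) k = PresentedGroup.mk (JRels (p + 1) k) (cycProd (p + 1) 0) := by
  rw [zElt, cycProd, map_list_prod, List.map_ofFn]
  refine congrArg List.prod (congrArg List.ofFn ?_)
  funext j
  simp only [Function.comp_apply, zero_add]
  rfl

private lemma zElt_split :
    zElt (p + 1) k
      = (List.ofFn fun j : Fin p =>
          (PresentedGroup.of j.castSucc : JGroup (p + 1) k)).prod
        * PresentedGroup.of (Fin.last p) := by
  rw [zElt, List.ofFn_succ', List.concat_eq_append, List.prod_append, List.prod_cons,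
    List.prod_nil, mul_one]

private lemma commute_of_zElt (i : Fin (p + 1)) :
    Commute (PresentedGroup.of i : JGroup (p + 1) k) (zElt (p + 1) k) := by
  have h := congrArg (PresentedGroup.mk (JRels (p + 1) k)) (cycProd_add_one i)
  rw [map_mul, map_mul, map_inv] at h
  rw [mk_cycProd_eq k (i + 1) 0, mk_cycProd_eq k i 0, ← zElt_eq] at h
  rw [mul_assoc, eq_inv_mul_iff_mul_eq] at h
  exact h

private lemma zElt_central (g : JGroup (p + 1) k) : Commute g (zElt (p + 1) k) := by
  have : g ∈ Subgroup.centralizer {zElt (p + 1) k} := by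
    apply PresentedGroup.generated_by
    intro j
    rw [Subgroup.mem_centralizer_iff]
    rintro x ⟨rfl⟩
    exact (commute_of_zElt k j).symm.eq
  have := Subgroup.mem_centralizer_iff.mp this (zElt (p + 1) k) rfl
  exact this.symm
section Target

open Multiplicative Monoid

variable {p : ℕ} (k : Fin (p + 1) → ℕ)

/-- The target group. -/
private abbrev TGroup :=
  (Monoid.CoprodI fun i : Fin p => Multiplicative (ZMod (k i.castSucc))) × Multiplicative ℤ

private def AElt : Monoid.CoprodI fun i : Fin p => Multiplicative (ZMod (k i.castSucc)) :=
  (List.ofFn fun j : Fin p =>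
    Monoid.CoprodI.of (M := fun i : Fin p => Multiplicative (ZMod (k i.castSucc))) (i := j)
      (ofAdd 1)).prod

private def Fmap : Fin (p + 1) → TGroup k :=
  Fin.lastCases ((AElt k)⁻¹, ofAdd (1 : ℤ))
    (fun j => (Monoid.CoprodI.of (M := fun i : Fin p => Multiplicative (ZMod (k i.castSucc)))
      (i := j) (ofAdd 1), 1))

private lemma Fmap_castSucc (j : Fin p) :
    Fmap k j.castSucc
      = (Monoid.CoprodI.of (M := fun i : Fin p => Multiplicative (ZMod (k i.castSucc)))
          (i := j) (ofAdd 1), 1) :=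
  Fin.lastCases_castSucc ..

private lemma Fmap_last : Fmap k (Fin.last p) = ((AElt k)⁻¹, ofAdd (1 : ℤ)) :=
  Fin.lastCases_last ..

private lemma lift_F_cycProd_zero :
    FreeGroup.lift (Fmap k) (cycProd (p + 1) 0) = (1, ofAdd (1 : ℤ)) := by
  rw [cycProd, map_list_prod, List.map_ofFn]
  have h1 : (FreeGroup.lift (Fmap k)) ∘ (fun j : Fin (p + 1) => FreeGroup.of (0 + j))
      = Fmap k := by
    funext j
    simp [zero_add]
  rw [h1, List.ofFn_succ', List.concat_eq_append, List.prod_append, List.prod_cons,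
    List.prod_nil, mul_one, Fmap_last]
  have h2 : (List.ofFn fun j : Fin p => Fmap k j.castSucc)
      = List.map (MonoidHom.inl _ (Multiplicative ℤ))
          (List.ofFn fun j : Fin p =>
            Monoid.CoprodI.of (M := fun i : Fin p => Multiplicative (ZMod (k i.castSucc)))
              (i := j) (ofAdd 1)) := by
    rw [List.map_ofFn]
    refine congrArg List.ofFn ?_
    funext j
    rw [Fmap_castSucc]
    rfl
  rw [h2, ← map_list_prod, ← AElt]
  ext
  · simp
  · simp

private lemma commute_pair (x : TGroup k) :
    Commute x ((1, ofAdd (1 : ℤ)) : TGroup k) := by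
  obtain ⟨a, b⟩ := x
  simp [Commute, SemiconjBy, Prod.ext_iff, mul_comm]

open Fin.NatCast Fin.CommRing in
private lemma lift_F_cycProd (i : Fin (p + 1)) :
    FreeGroup.lift (Fmap k) (cycProd (p + 1) i) = (1, ofAdd (1 : ℤ)) := by
  have key : ∀ n : ℕ, FreeGroup.lift (Fmap k) (cycProd (p + 1) ((n : Fin (p + 1)))) =
      (1, ofAdd (1 : ℤ)) := by
    intro n
    induction n with
    | zero => simpa using lift_F_cycProd_zero k
    | succ n ih =>
      have hc : ((n + 1 : ℕ) : Fin (p + 1)) = ((n : ℕ) : Fin (p + 1)) + 1 := by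
        push_cast
        ring
      rw [hc, cycProd_add_one, map_mul, map_mul, map_inv, ih]
      have hcomm := commute_pair k (FreeGroup.lift (Fmap k) (FreeGroup.of ((n : Fin (p + 1)))))
      rw [mul_assoc, ← hcomm.eq, ← mul_assoc, inv_mul_cancel, one_mul]
  rw [← Fin.cast_val_eq_self i]
  exact key i.val

private lemma hF (hlast : k (Fin.last p) = 0) :
    ∀ r ∈ JRels (p + 1) k, FreeGroup.lift (Fmap k) r = 1 := by
  rintro r (⟨i, rfl⟩ | ⟨i, j, rfl⟩)
  · rw [map_pow, FreeGroup.lift_apply_of]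
    induction i using Fin.lastCases with
    | last => rw [hlast, pow_zero]
    | cast j =>
      rw [Fmap_castSucc, Prod.pow_mk, one_pow]
      have : (ofAdd (1 : ZMod (k j.castSucc))) ^ (k j.castSucc) = 1 := by
        rw [← ofAdd_nsmul, nsmul_eq_mul, mul_one, ZMod.natCast_self]
        rfl
      rw [← map_pow, this, map_one]
      rfl
  · rw [map_mul, map_inv, lift_F_cycProd, lift_F_cycProd, mul_inv_cancel]

end Target
section Psi

open Multiplicative Monoid

variable {p : ℕ} (k : Fin (p + 1) → ℕ)

/-- Homomorphism `Multiplicative (ZMod n) →* H` from an element whose `n`-th power is `1`. -/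
private def genHom {H : Type*} [Group H] (n : ℕ) (x : H) (hx : x ^ n = 1) :
    Multiplicative (ZMod n) →* H :=
  AddMonoidHom.toMultiplicativeLeft <|
    ZMod.lift n ⟨zmultiplesHom (Additive H) (Additive.ofMul x), by
      show ((n : ℤ)) • Additive.ofMul x = 0
      rw [← ofMul_zpow, zpow_natCast, hx]
      rfl⟩

private lemma genHom_ofAdd_intCast {H : Type*} [Group H] (n : ℕ) (x : H) (hx : x ^ n = 1)
    (m : ℤ) : genHom n x hx (ofAdd ((m : ℤ) : ZMod n)) = x ^ m := by
  simp only [genHom, AddMonoidHom.coe_toMultiplicativeLeft, Function.comp_apply, toAdd_ofAdd,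
    ZMod.lift_coe, zmultiplesHom_apply]
  rw [← ofMul_zpow]
  rfl

private lemma genHom_ofAdd_one {H : Type*} [Group H] (n : ℕ) (x : H) (hx : x ^ n = 1) :
    genHom n x hx (ofAdd (1 : ZMod n)) = x := by
  have h1 : (1 : ZMod n) = ((1 : ℤ) : ZMod n) := by simp
  rw [h1, genHom_ofAdd_intCast, zpow_one]

/-- Monoid homs out of `Multiplicative (ZMod n)` are determined by the value at `ofAdd 1`. -/
private lemma mzmod_hom_ext {H : Type*} [Group H] {n : ℕ}
    {f g : Multiplicative (ZMod n) →* H} (h : f (ofAdd (1 : ZMod n)) = g (ofAdd (1 : ZMod n))) :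
    f = g := by
  apply MonoidHom.ext; intro x
  obtain ⟨m, hm⟩ := ZMod.intCast_surjective (Multiplicative.toAdd x)
  have hx0 : x = ofAdd ((m : ℤ) : ZMod n) := by rw [hm]; rfl
  have hx : (ofAdd ((m : ℤ) : ZMod n) : Multiplicative (ZMod n))
      = (ofAdd (1 : ZMod n)) ^ m := by
    rw [← ofAdd_zsmul]
    congr 1
    rw [zsmul_eq_mul, mul_one]
  rw [hx0, hx, map_zpow, map_zpow, h]

end Psi

/-- Let `K = (k_1,…,k_p)` with `k_p = ∞` (generators indexed by
`Fin (p+1)`, the last entry being `∞`, encoded by `0`).  Writing `z = s_1⋯s_p`, the group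
`J(K)` decomposes as the direct product `⟨s_1,…,s_{p−1}⟩ × ⟨z⟩`, where `⟨s_1,…,s_{p−1}⟩` is
the free product of the cyclic groups `⟨s_i⟩ ≅ ℤ/k_iℤ` (or `ℤ` when `k_i = ∞`) and
`⟨z⟩ ≅ ℤ`. -/
theorem stmt19 (p : ℕ) (k : Fin (p + 1) → ℕ) (hk : ∀ i, k i ≠ 1)
    (hlast : k (Fin.last p) = 0) :
    ∃ φ : JGroup (p + 1) k ≃*
        (Monoid.CoprodI fun i : Fin p => Multiplicative (ZMod (k i.castSucc))) ×
          Multiplicative ℤ,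
      (∀ i : Fin p,
        φ (PresentedGroup.of i.castSucc) =
          (Monoid.CoprodI.of (M := fun j : Fin p => Multiplicative (ZMod (k j.castSucc))) (i := i) (Multiplicative.ofAdd (1 : ZMod (k i.castSucc))), 1)) ∧
      φ (zElt (p + 1) k) = (1, Multiplicative.ofAdd (1 : ℤ)) := by
  classical
  set φ0 : JGroup (p + 1) k →* TGroup k := PresentedGroup.toGroup (hF k hlast) with hφ0
  have hφ_of : ∀ i : Fin (p + 1), φ0 (PresentedGroup.of i) = Fmap k i :=
    fun i => PresentedGroup.toGroup.of _
  have hφ_mk : ∀ w, φ0 (PresentedGroup.mk (JRels (p + 1) k) w) = FreeGroup.lift (Fmap k) w :=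
    fun w => rfl
  have hφz : φ0 (zElt (p + 1) k) = (1, Multiplicative.ofAdd (1 : ℤ)) := by
    rw [zElt_eq, hφ_mk, lift_F_cycProd_zero]
  set g : ∀ j : Fin p, Multiplicative (ZMod (k j.castSucc)) →* JGroup (p + 1) k :=
    fun j => genHom _ _ (of_pow_eq_one k j.castSucc) with hg
  set ψ₁ : (Monoid.CoprodI fun i : Fin p => Multiplicative (ZMod (k i.castSucc)))
      →* JGroup (p + 1) k := Monoid.CoprodI.lift g with hψ₁
  set ψ₂ : Multiplicative ℤ →* JGroup (p + 1) k := zpowersHom _ (zElt (p + 1) k) with hψ₂def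
  have hψ₂ : ∀ n, ψ₂ n = zElt (p + 1) k ^ (Multiplicative.toAdd n) := fun n => rfl
  set ψ : TGroup k →* JGroup (p + 1) k :=
    ψ₁.noncommCoprod ψ₂ (fun m n => by
      rw [hψ₂]
      exact (zElt_central k (ψ₁ m)).zpow_right _) with hψdef
  have hψ_apply : ∀ a b, ψ (a, b) = ψ₁ a * ψ₂ b := fun a b => rfl
  have hψ₁of : ∀ j : Fin p,
      ψ₁ (Monoid.CoprodI.of (M := fun i : Fin p => Multiplicative (ZMod (k i.castSucc)))
        (i := j) (Multiplicative.ofAdd 1)) = PresentedGroup.of j.castSucc := by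
    intro j
    rw [hψ₁, Monoid.CoprodI.lift_of]
    exact genHom_ofAdd_one _ _ _
  have h1 : ψ.comp φ0 = MonoidHom.id _ := by
    apply PresentedGroup.ext
    intro x
    rw [MonoidHom.comp_apply, MonoidHom.id_apply, hφ_of]
    induction x using Fin.lastCases with
    | last =>
      rw [Fmap_last, hψ_apply, map_inv]
      have hA : ψ₁ (AElt k)
          = (List.ofFn fun j : Fin p =>
              (PresentedGroup.of j.castSucc : JGroup (p + 1) k)).prod := by
        rw [AElt, map_list_prod, List.map_ofFn]
        refine congrArg List.prod (congrArg List.ofFn ?_)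
        funext j
        simp only [Function.comp_apply]
        exact hψ₁of j
      rw [hA, hψ₂]
      simp only [toAdd_ofAdd, zpow_one]
      rw [zElt_split k, ← mul_assoc, inv_mul_cancel, one_mul]
    | cast j =>
      rw [Fmap_castSucc, hψ_apply, show ψ₂ 1 = 1 from map_one ψ₂, mul_one, hψ₁of]
  have h2 : φ0.comp ψ = MonoidHom.id _ := by
    have hinl : (φ0.comp ψ).comp (MonoidHom.inl _ _)
        = MonoidHom.inl _ (Multiplicative ℤ) := by
      apply Monoid.CoprodI.ext_hom
      intro j
      apply mzmod_hom_ext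
      simp only [MonoidHom.comp_apply, MonoidHom.inl_apply]
      rw [hψ_apply, show ψ₂ 1 = 1 from map_one ψ₂, mul_one, hψ₁of, hφ_of, Fmap_castSucc]
    have hinr : (φ0.comp ψ).comp (MonoidHom.inr _ _)
        = MonoidHom.inr _ (Multiplicative ℤ) := by
      apply MonoidHom.ext_mint
      simp only [MonoidHom.comp_apply, MonoidHom.inr_apply]
      rw [hψ_apply, show ψ₁ 1 = 1 from map_one ψ₁, one_mul, hψ₂]
      simp only [toAdd_ofAdd, zpow_one]
      rw [hφz]
    apply MonoidHom.ext
    rintro ⟨a, b⟩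
    have hsplit : ((a, b) : TGroup k)
        = (MonoidHom.inl _ (Multiplicative ℤ) a) * (MonoidHom.inr _ (Multiplicative ℤ) b) := by
      simp
    rw [MonoidHom.id_apply, hsplit, map_mul]
    rw [← MonoidHom.comp_apply (φ0.comp ψ) (MonoidHom.inl _ _),
      ← MonoidHom.comp_apply (φ0.comp ψ) (MonoidHom.inr _ _), hinl, hinr]
  refine ⟨MonoidHom.toMulEquiv φ0 ψ h1 h2, ?_, ?_⟩
  · intro i
    have : (MonoidHom.toMulEquiv φ0 ψ h1 h2) (PresentedGroup.of i.castSucc)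
        = φ0 (PresentedGroup.of i.castSucc) := rfl
    rw [this, hφ_of, Fmap_castSucc]
  · have : (MonoidHom.toMulEquiv φ0 ψ h1 h2) (zElt (p + 1) k) = φ0 (zElt (p + 1) k) := rfl
    rw [this, hφz]
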